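/- Let k be a field, A = k[a_1,a_2] the polynomial ring, p ≥ 2, x_1 = a_1^p, x_2 = a_2^p, y = a_1 a_2^{p-1}. Let φ : A[X_1,X_2,Y] → A[t] be the A-algebra map sending X_1 ↦ x_1 t, X_2 ↦ x_2 t, Y ↦ y t. Then ker φ is the ideal of A[X_1,X_2,Y] generated by the polynomials F_1 = a_1^{p-1}Y − a_2^{p-1}X_1, G_1 = a_2 Y − a_1 X_2, and F_n = a_1^{p-n}Y^n − a_2^{p-n}X_1 X_2^{n-1} for 2 ≤ n ≤ p. -/

import Mathlib

namespace Stmt10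
open MvPolynomial

variable {k : Type*} [Field k]

local notation "Amv" => MvPolynomial (Fin 2) k
local notation "Rmv" => MvPolynomial (Fin 3) (MvPolynomial (Fin 2) k)

noncomputable def Phi (p : ℕ) : Rmv →ₐ[Amv] Polynomial Amv :=
  MvPolynomial.aeval ![Polynomial.C (X 0 ^ p) * Polynomial.X,
    Polynomial.C (X 1 ^ p) * Polynomial.X,
    Polynomial.C (X 0 * X 1 ^ (p - 1)) * Polynomial.X]

noncomputable def gens (p : ℕ) : Set Rmv :=
  {C ((X 0 : Amv) ^ (p - 1)) * X 2 - C ((X 1 : Amv) ^ (p - 1)) * X 0,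
   C (X 1 : Amv) * X 2 - C (X 0 : Amv) * X 1} ∪
  (fun n => C ((X 0 : Amv) ^ (p - n)) * X 2 ^ n
      - C ((X 1 : Amv) ^ (p - n)) * (X 0 * X 1 ^ (n - 1))) '' Set.Icc 2 p

noncomputable def vm (u v i j l : ℕ) : Rmv :=
  C ((X 0 : Amv) ^ u * (X 1 : Amv) ^ v) * X 0 ^ i * X 1 ^ j * X 2 ^ l

noncomputable def vmi (q : ℕ × ℕ × ℕ × ℕ × ℕ) : Rmv :=
  vm q.1 q.2.1 q.2.2.1 q.2.2.2.1 q.2.2.2.2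

noncomputable def eps (a b n : ℕ) : Polynomial Amv :=
  Polynomial.C ((X 0 : Amv) ^ a * (X 1 : Amv) ^ b) * Polynomial.X ^ n

noncomputable def epsT (t : ℕ × ℕ × ℕ) : Polynomial Amv := eps t.1 t.2.1 t.2.2

def wmap (p : ℕ) (q : ℕ × ℕ × ℕ × ℕ × ℕ) : ℕ × ℕ × ℕ :=
  (q.1 + p * q.2.2.1 + q.2.2.2.2,
   q.2.1 + p * q.2.2.2.1 + (p - 1) * q.2.2.2.2,
   q.2.2.1 + q.2.2.2.1 + q.2.2.2.2)

lemma phi_vm (p u v i j l : ℕ) :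
    Phi (k := k) p (vm u v i j l)
      = eps (u + p * i + l) (v + p * j + (p - 1) * l) (i + j + l) := by
  simp only [Phi, vm, eps, map_mul, map_pow, aeval_X, aeval_C, Polynomial.algebraMap_eq,
    Matrix.cons_val_zero, Matrix.cons_val_one, Matrix.head_cons, Matrix.cons_val_two,
    Matrix.tail_cons]
  rw [mul_pow, mul_pow, mul_pow]
  simp only [pow_add, pow_mul, Polynomial.C_mul, Polynomial.C_pow, mul_pow]
  ring

lemma phi_vmi (p : ℕ) (q : ℕ × ℕ × ℕ × ℕ × ℕ) :
    Phi (k := k) p (vmi q) = epsT (wmap p q) := phi_vm p _ _ _ _ _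

/-! ### Linear independence of the `eps` monomials -/

lemma pair_inj : Function.Injective (fun c : ℕ × ℕ × ℕ =>
    ((Finsupp.single (0 : Fin 2) c.1 + Finsupp.single 1 c.2.1, c.2.2) :
      (Fin 2 →₀ ℕ) × ℕ)) := by
  rintro ⟨a, b, n⟩ ⟨a', b', n'⟩ h
  simp only [Prod.mk.injEq] at h
  obtain ⟨h1, h2⟩ := h
  have h0 := DFunLike.congr_fun h1 0
  have h1' := DFunLike.congr_fun h1 1
  simp [Finsupp.single_apply] at h0 h1'
  simp_all

lemma eps_eq_basis (a b n : ℕ) :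
    eps (k := k) a b n =
      ((MvPolynomial.basisMonomials (Fin 2) k).smulTower
        (Polynomial.basisMonomials Amv))
        (Finsupp.single (0 : Fin 2) a + Finsupp.single 1 b, n) := by
  rw [Module.Basis.smulTower_apply]
  simp only [MvPolynomial.coe_basisMonomials, Polynomial.coe_basisMonomials]
  rw [Polynomial.smul_eq_C_mul, ← Polynomial.X_pow_eq_monomial]
  unfold eps
  congr 1
  rw [X_pow_eq_monomial, X_pow_eq_monomial, monomial_mul, one_mul]

lemma eps_li : LinearIndependent k (epsT (k := k)) := by
  have hli := (((MvPolynomial.basisMonomials (Fin 2) k).smulTower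
      (Polynomial.basisMonomials Amv)).linearIndependent).comp _ pair_inj
  convert hli using 1
  funext c
  exact eps_eq_basis c.1 c.2.1 c.2.2
  rfl

/-! ### The `vm` monomials span everything over `k` -/

lemma span_vm_top (f : Rmv) : f ∈ Submodule.span k (Set.range (vmi (k := k))) := by
  set S := Submodule.span k (Set.range (vmi (k := k))) with hS
  have hmul : ∀ g : Rmv, (∀ q, g * vmi q ∈ S) → ∀ f ∈ S, g * f ∈ S := by
    intro g hg f hf
    induction hf using Submodule.span_induction with
    | mem x hx => obtain ⟨q, rfl⟩ := hx; exact hg q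
    | zero => rw [mul_zero]; exact Submodule.zero_mem _
    | add x y _ _ hx hy => rw [mul_add]; exact add_mem hx hy
    | smul a x _ hx => rw [mul_smul_comm]; exact Submodule.smul_mem _ _ hx
  induction f using MvPolynomial.induction_on with
  | C a =>
      induction a using MvPolynomial.induction_on with
      | C c =>
          have h1 : (C (MvPolynomial.C c) : Rmv) = c • vmi (0, 0, 0, 0, 0) := by
            have : (algebraMap k Rmv) c = C (MvPolynomial.C c) := rfl
            rw [← this, Algebra.smul_def]
            simp [vmi, vm]
          rw [h1]
          exact Submodule.smul_mem _ _ (Submodule.subset_span ⟨_, rfl⟩)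
      | add a b ha hb => rw [map_add]; exact add_mem ha hb
      | mul_X a n ha =>
          rw [map_mul, mul_comm]
          refine hmul _ ?_ _ ha
          intro q
          obtain ⟨u, v, i, j, l⟩ := q
          apply Submodule.subset_span
          fin_cases n
          · exact ⟨(u + 1, v, i, j, l), by simp [vmi, vm, pow_succ, map_mul]; ring⟩
          · exact ⟨(u, v + 1, i, j, l), by simp [vmi, vm, pow_succ, map_mul]; ring⟩
  | add f g hf hg => exact add_mem hf hg
  | mul_X f n hf =>
      rw [mul_comm]
      refine hmul _ ?_ _ hf
      intro q
      obtain ⟨u, v, i, j, l⟩ := q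
      apply Submodule.subset_span
      fin_cases n
      · exact ⟨(u, v, i + 1, j, l), by simp [vmi, vm, pow_succ, map_mul]; ring⟩
      · exact ⟨(u, v, i, j + 1, l), by simp [vmi, vm, pow_succ, map_mul]; ring⟩
      · exact ⟨(u, v, i, j, l + 1), by simp [vmi, vm, pow_succ, map_mul]; ring⟩

/-! ### Rewrite steps modulo the ideal -/

lemma G1_mem (p : ℕ) :
    (C (X 1 : Amv) * X 2 - C (X 0 : Amv) * X 1 : Rmv) ∈ gens (k := k) p := by
  left; right; rfl

lemma F_mem (p n : ℕ) (h1 : 1 ≤ n) (h2 : n ≤ p) :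
    (C ((X 0 : Amv) ^ (p - n)) * X 2 ^ n
      - C ((X 1 : Amv) ^ (p - n)) * (X 0 * X 1 ^ (n - 1)) : Rmv) ∈ gens (k := k) p := by
  rcases eq_or_lt_of_le h1 with h | h
  · left; left
    simp [← h]
  · right; exact ⟨n, ⟨h, h2⟩, rfl⟩

lemma L_G (p u v i j l : ℕ) :
    vm (k := k) u (v + 1) i j (l + 1) - vm (u + 1) v i (j + 1) l
      ∈ Ideal.span (gens (k := k) p) := by
  have key : vm (k := k) u (v + 1) i j (l + 1) - vm (u + 1) v i (j + 1) l
      = vm u v i j l * (C (X 1 : Amv) * X 2 - C (X 0 : Amv) * X 1) := by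
    simp only [vm, pow_succ, map_mul, mul_sub]
    ring
  rw [key]
  exact Ideal.mul_mem_left _ _ (Ideal.subset_span (G1_mem p))

lemma L_F (p n u v i j l : ℕ) (h1 : 1 ≤ n) (h2 : n ≤ p) :
    vm (k := k) (u + (p - n)) v i j (l + n) - vm u (v + (p - n)) (i + 1) (j + (n - 1)) l
      ∈ Ideal.span (gens (k := k) p) := by
  have key : vm (k := k) (u + (p - n)) v i j (l + n)
        - vm u (v + (p - n)) (i + 1) (j + (n - 1)) l
      = vm u v i j l * (C ((X 0 : Amv) ^ (p - n)) * X 2 ^ n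
          - C ((X 1 : Amv) ^ (p - n)) * (X 0 * X 1 ^ (n - 1))) := by
    simp only [vm, pow_succ, pow_add, map_mul, mul_sub]
    ring
  rw [key]
  exact Ideal.mul_mem_left _ _ (Ideal.subset_span (F_mem p n h1 h2))

lemma L_K (p u v i j l : ℕ) (hp : 2 ≤ p) :
    vm (k := k) u (v + p) (i + 1) j l - vm (u + p) v i (j + 1) l
      ∈ Ideal.span (gens (k := k) p) := by
  obtain ⟨e, rfl⟩ : ∃ e, p = e + 1 := ⟨p - 1, by omega⟩
  have hF1 : (C ((X 0 : Amv) ^ e) * X 2 - C ((X 1 : Amv) ^ e) * X 0 : Rmv)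
      ∈ gens (k := k) (e + 1) := by
    left; left; simp
  have key : vm (k := k) u (v + (e + 1)) (i + 1) j l - vm (u + (e + 1)) v i (j + 1) l
      = vm u v i j l * (C ((X 0 : Amv) ^ e)
            * (C (X 1 : Amv) * X 2 - C (X 0 : Amv) * X 1))
        - vm u v i j l * (C (X 1 : Amv)
            * (C ((X 0 : Amv) ^ e) * X 2 - C ((X 1 : Amv) ^ e) * X 0)) := by
    simp only [vm, pow_succ, pow_add, map_mul, mul_sub]
    ring
  rw [key]
  exact sub_mem
    (Ideal.mul_mem_left _ _ (Ideal.mul_mem_left _ _ (Ideal.subset_span (G1_mem _))))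
    (Ideal.mul_mem_left _ _ (Ideal.mul_mem_left _ _ (Ideal.subset_span hF1)))

/-! ### Normal forms -/

def IsNormal (p u v i j l : ℕ) : Prop :=
  (l = 0 ∧ (i = 0 ∨ v < p)) ∨ (1 ≤ l ∧ v = 0 ∧ u + l < p)

lemma step (p : ℕ) (hp : 2 ≤ p) (u v i j l : ℕ) (h : ¬ IsNormal p u v i j l) :
    ∃ u₁ v₁ i₁ j₁ l₁,
      vm (k := k) u v i j l - vm u₁ v₁ i₁ j₁ l₁ ∈ Ideal.span (gens (k := k) p) ∧
      u₁ + p * i₁ + l₁ = u + p * i + l ∧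
      v₁ + p * j₁ + (p - 1) * l₁ = v + p * j + (p - 1) * l ∧
      i₁ + j₁ + l₁ = i + j + l ∧
      2 * l₁ + i₁ < 2 * l + i := by
  unfold IsNormal at h
  push_neg at h
  rcases Nat.eq_zero_or_pos l with hl | hl
  · -- l = 0 : must be a K-step
    subst hl
    obtain ⟨hi, hv⟩ := (h.1 rfl)
    obtain ⟨i₀, rfl⟩ : ∃ i₀, i = i₀ + 1 := ⟨i - 1, by omega⟩
    obtain ⟨v₀, rfl⟩ : ∃ v₀, v = v₀ + p := ⟨v - p, by omega⟩
    refine ⟨u + p, v₀, i₀, j + 1, 0, L_K p u v₀ i₀ j 0 hp, by ring, by ring, by ring, by omega⟩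
  · rcases Nat.eq_zero_or_pos v with hv | hv
    · -- v = 0, so u + l ≥ p : an F-step
      subst hv
      have hul : p ≤ u + l := by
        rcases h.2 hl rfl with h' ; omega
      rcases le_or_gt l p with hlp | hlp
      · -- use F_l with n := l
        obtain ⟨u₀, rfl⟩ : ∃ u₀, u = u₀ + (p - l) := ⟨u - (p - l), by omega⟩
        refine ⟨u₀, 0 + (p - l), i + 1, j + (l - 1), 0, ?_, ?_, ?_, by zify [hl]; ring, by omega⟩
        · have := L_F (k := k) p l u₀ 0 i j 0 hl hlp
          rwa [zero_add] at this
        · zify [show p - l ≤ p - l from le_rfl, show l ≤ p from hlp]; ring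
        · zify [show l ≤ p from hlp, hl, show (1:ℕ) ≤ p from by omega,
            show (1:ℤ) ≤ (l:ℤ) from by exact_mod_cast hl]
          ring
      · -- l > p : use F_p with n := p
        obtain ⟨l₀, rfl⟩ : ∃ l₀, l = l₀ + p := ⟨l - p, by omega⟩
        refine ⟨u, 0, i + 1, j + (p - 1), l₀, ?_, by ring, ?_, ?_, by omega⟩
        · have := L_F (k := k) p p u 0 i j l₀ (by omega) le_rfl
          simpa only [Nat.sub_self, add_zero] using this
        · zify [show (1:ℕ) ≤ p from by omega]; ring
        · zify [show (1:ℕ) ≤ p from by omega]; ring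
    · -- v ≥ 1, l ≥ 1 : a G-step
      obtain ⟨v₀, rfl⟩ : ∃ v₀, v = v₀ + 1 := ⟨v - 1, by omega⟩
      obtain ⟨l₀, rfl⟩ : ∃ l₀, l = l₀ + 1 := ⟨l - 1, by omega⟩
      refine ⟨u + 1, v₀, i, j + 1, l₀, L_G p u v₀ i j l₀, by ring, ?_, by ring, by omega⟩
      zify [show (1:ℕ) ≤ p from by omega]; ring

lemma no_lt_l (p u v i j l u' v' i' j' l' : ℕ) (hp : 2 ≤ p)
    (hm : IsNormal p u v i j l) (hm' : IsNormal p u' v' i' j' l')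
    (e1 : u + p * i + l = u' + p * i' + l')
    (e2 : v + p * j + (p - 1) * l = v' + p * j' + (p - 1) * l')
    (e3 : i + j + l = i' + j' + l') (hll : l < l') : False := by
  have hp1 : (1 : ℕ) ≤ p := by omega
  rcases hm' with ⟨h0, -⟩ | ⟨hl1', hv', hu'⟩
  · omega
  · subst hv'
    zify [hp1] at e1 e2 e3
    rcases hm with ⟨hl0, hiv⟩ | ⟨hl1, hv, hul⟩
    · -- l = 0 case
      subst hl0
      have f3 : (p : ℤ) * ((i : ℤ) + (j : ℤ)) = (p : ℤ) * ((i' : ℤ) + (j' : ℤ) + (l' : ℤ)) := by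
        rw [show ((i : ℤ) + (j : ℤ)) = ((i' : ℤ) + (j' : ℤ) + (l' : ℤ)) from by push_cast at e3 ⊢; linarith]
      have g1 : (u : ℤ) + (v : ℤ) = (u' : ℤ) := by push_cast at *; linear_combination e1 + e2 - f3
      have g2 : (v : ℤ) + (l' : ℤ) = (p : ℤ) * i - (p : ℤ) * i' := by
        push_cast at *; linear_combination e2 - f3
      have hpi : (i' : ℤ) < (i : ℤ) := by
        by_contra hc
        push_neg at hc
        have : (p : ℤ) * i ≤ (p : ℤ) * i' :=
          mul_le_mul_of_nonneg_left hc (by positivity)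
        have hl1' : (1 : ℤ) ≤ (l' : ℤ) := by exact_mod_cast hl1'
        linarith [g2, Int.ofNat_nonneg v]
      have hi1 : 1 ≤ i := by exact_mod_cast (by linarith [hpi, Int.ofNat_nonneg i'] : (1:ℤ) ≤ (i:ℤ))
      have hvp : v < p := by
        rcases hiv with h | h
        · omega
        · exact h
      have hpile : (p : ℤ) ≤ (p : ℤ) * i - (p : ℤ) * i' := by
        have h1 : (i' : ℤ) + 1 ≤ (i : ℤ) := by linarith
        nlinarith [show (0:ℤ) < (p:ℤ) from by positivity]
      -- v ≥ p - l', u' = u + v ≥ p - l', but u' + l' < p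
      have hu'c : (u' : ℤ) + (l' : ℤ) < (p : ℤ) := by exact_mod_cast hu'
      linarith [g1, g2, hpile, Int.ofNat_nonneg u]
    · -- l ≥ 1 case : divisibility contradiction
      subst hv
      have key : (p : ℤ) ∣ ((l' : ℤ) - (l : ℤ)) := by
        refine ⟨(l' : ℤ) - l - j + j', ?_⟩
        push_cast at e2
        linear_combination e2
      have hpos : (0 : ℤ) < (l' : ℤ) - (l : ℤ) := by
        have : (l : ℤ) < (l' : ℤ) := by exact_mod_cast hll
        linarith
      have hle := Int.le_of_dvd hpos key
      have : (l' : ℤ) < (p : ℤ) := by exact_mod_cast (by omega : l' < p)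
      linarith [Int.ofNat_nonneg l]

lemma no_lt_i (p u v i j l u' v' i' j' l' : ℕ) (hp : 2 ≤ p)
    (hm' : IsNormal p u' v' i' j' l')
    (e2 : v + p * j + (p - 1) * l = v' + p * j' + (p - 1) * l')
    (e3 : i + j + l = i' + j' + l') (hll : l = l') (hii : i < i') : False := by
  have hp1 : (1 : ℕ) ≤ p := by omega
  subst hll
  zify [hp1] at e2 e3
  have hj : (j' : ℤ) + 1 ≤ (j : ℤ) := by
    have : (i : ℤ) + 1 ≤ (i' : ℤ) := by exact_mod_cast hii
    push_cast at e3; linarith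
  have f3 : (p : ℤ) * ((j : ℤ) - (j' : ℤ)) ≥ (p : ℤ) := by
    nlinarith [show (0:ℤ) < (p:ℤ) from by positivity]
  have hv' : (p : ℤ) ≤ (v' : ℤ) := by push_cast at e2; linarith [Int.ofNat_nonneg v]
  have hi'pos : 1 ≤ i' := by omega
  rcases hm' with ⟨-, hiv⟩ | ⟨-, hv'0, -⟩
  · rcases hiv with h | h
    · omega
    · have : (v' : ℤ) < (p : ℤ) := by exact_mod_cast h
      linarith
  · subst hv'0
    simp at hv'
    omega

lemma uniq (p u v i j l u' v' i' j' l' : ℕ) (hp : 2 ≤ p)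
    (hm : IsNormal p u v i j l) (hm' : IsNormal p u' v' i' j' l')
    (e1 : u + p * i + l = u' + p * i' + l')
    (e2 : v + p * j + (p - 1) * l = v' + p * j' + (p - 1) * l')
    (e3 : i + j + l = i' + j' + l') :
    u = u' ∧ v = v' ∧ i = i' ∧ j = j' ∧ l = l' := by
  have hll : l = l' := by
    rcases lt_trichotomy l l' with h | h | h
    · exact absurd (no_lt_l p u v i j l u' v' i' j' l' hp hm hm' e1 e2 e3 h) (by simp)
    · exact h
    · exact absurd (no_lt_l p u' v' i' j' l' u v i j l hp hm' hm e1.symm e2.symm e3.symm h)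
        (by simp)
  have hii : i = i' := by
    rcases lt_trichotomy i i' with h | h | h
    · exact absurd (no_lt_i p u v i j l u' v' i' j' l' hp hm' e2 e3 hll h) (by simp)
    · exact h
    · exact absurd (no_lt_i p u' v' i' j' l' u v i j l hp hm e2.symm e3.symm hll.symm h)
        (by simp)
  subst hll; subst hii
  have hjj : j = j' := by omega
  subst hjj
  have huu : u = u' := by
    zify at e1; linarith
  have hvv : v = v' := by
    zify at e2; linarith
  exact ⟨huu, hvv, rfl, rfl, rfl⟩

lemma key_fuel (p : ℕ) (hp : 2 ≤ p) :
    ∀ fuel u v i j l u' v' i' j' l',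
      2 * l + i + (2 * l' + i') ≤ fuel →
      u + p * i + l = u' + p * i' + l' →
      v + p * j + (p - 1) * l = v' + p * j' + (p - 1) * l' →
      i + j + l = i' + j' + l' →
      vm (k := k) u v i j l - vm u' v' i' j' l' ∈ Ideal.span (gens (k := k) p) := by
  intro fuel
  induction fuel with
  | zero =>
      intro u v i j l u' v' i' j' l' hf e1 e2 e3
      have h1 : IsNormal p u v i j l := Or.inl ⟨by omega, Or.inl (by omega)⟩
      have h2 : IsNormal p u' v' i' j' l' := Or.inl ⟨by omega, Or.inl (by omega)⟩
      obtain ⟨hu, hv, hi, hj, hl⟩ := uniq p u v i j l u' v' i' j' l' hp h1 h2 e1 e2 e3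
      subst hu; subst hv; subst hi; subst hj; subst hl
      simp
  | succ fuel IH =>
      intro u v i j l u' v' i' j' l' hf e1 e2 e3
      by_cases hn : IsNormal p u v i j l
      · by_cases hn' : IsNormal p u' v' i' j' l'
        · obtain ⟨hu, hv, hi, hj, hl⟩ := uniq p u v i j l u' v' i' j' l' hp hn hn' e1 e2 e3
          subst hu; subst hv; subst hi; subst hj; subst hl
          simp
        · obtain ⟨u₁, v₁, i₁, j₁, l₁, hmem, f1, f2, f3, hlt⟩ := step (k := k) p hp u' v' i' j' l' hn'
          have hrec := IH u v i j l u₁ v₁ i₁ j₁ l₁ (by omega)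
            (e1.trans f1.symm) (e2.trans f2.symm) (e3.trans f3.symm)
          have : vm (k := k) u v i j l - vm u' v' i' j' l'
              = (vm u v i j l - vm u₁ v₁ i₁ j₁ l₁) - (vm u' v' i' j' l' - vm u₁ v₁ i₁ j₁ l₁) := by
            ring
          rw [this]
          exact sub_mem hrec hmem
      · obtain ⟨u₁, v₁, i₁, j₁, l₁, hmem, f1, f2, f3, hlt⟩ := step (k := k) p hp u v i j l hn
        have hrec := IH u₁ v₁ i₁ j₁ l₁ u' v' i' j' l' (by omega)
          (f1.trans e1) (f2.trans e2) (f3.trans e3)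
        have : vm (k := k) u v i j l - vm u' v' i' j' l'
            = (vm u v i j l - vm u₁ v₁ i₁ j₁ l₁) + (vm u₁ v₁ i₁ j₁ l₁ - vm u' v' i' j' l') := by
          ring
        rw [this]
        exact add_mem hmem hrec

lemma key (p : ℕ) (hp : 2 ≤ p) (q q' : ℕ × ℕ × ℕ × ℕ × ℕ) (h : wmap p q = wmap p q') :
    vmi (k := k) q - vmi q' ∈ Ideal.span (gens (k := k) p) := by
  obtain ⟨u, v, i, j, l⟩ := q
  obtain ⟨u', v', i', j', l'⟩ := q'
  simp only [wmap, Prod.mk.injEq] at h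
  exact key_fuel p hp (2 * l + i + (2 * l' + i')) u v i j l u' v' i' j' l' le_rfl
    h.1 h.2.1 h.2.2

lemma eps_sub_zero (a b n a' b' n' : ℕ) (h1 : a = a') (h2 : b = b') (h3 : n = n') :
    eps (k := k) a b n - eps a' b' n' = 0 := by
  subst h1; subst h2; subst h3; exact sub_self _

lemma gens_phi_zero (p : ℕ) (hp : 2 ≤ p) :
    ∀ x ∈ gens (k := k) p, Phi (k := k) p x = 0 := by
  rintro x (⟨hx | hx⟩ | ⟨n, ⟨hn2, hnp⟩, rfl⟩)
  · -- F₁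
    rw [hx]
    have hv : (C ((X 0 : Amv) ^ (p - 1)) * X 2 - C ((X 1 : Amv) ^ (p - 1)) * X 0 : Rmv)
        = vm (p - 1) 0 0 0 1 - vm 0 (p - 1) 1 0 0 := by
      simp [vm]
    rw [hv, map_sub, phi_vm, phi_vm]
    exact eps_sub_zero _ _ _ _ _ _ (by omega) (by omega) (by omega)
  · -- G₁
    rw [Set.mem_singleton_iff] at hx
    rw [hx]
    have hv : (C (X 1 : Amv) * X 2 - C (X 0 : Amv) * X 1 : Rmv)
        = vm 0 1 0 0 1 - vm 1 0 0 1 0 := by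
      simp [vm]
    rw [hv, map_sub, phi_vm, phi_vm]
    exact eps_sub_zero _ _ _ _ _ _ (by omega) (by omega) (by omega)
  · -- Fₙ
    show Phi (k := k) p (C ((X 0 : Amv) ^ (p - n)) * X 2 ^ n
      - C ((X 1 : Amv) ^ (p - n)) * (X 0 * X 1 ^ (n - 1))) = 0
    have hv : (C ((X 0 : Amv) ^ (p - n)) * X 2 ^ n
          - C ((X 1 : Amv) ^ (p - n)) * (X 0 * X 1 ^ (n - 1)) : Rmv)
        = vm (p - n) 0 0 0 n - vm 0 (p - n) 1 (n - 1) 0 := by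
      simp [vm]; ring
    rw [hv, map_sub, phi_vm, phi_vm]
    refine eps_sub_zero _ _ _ _ _ _ (by omega) ?_ (by omega)
    zify [show (1:ℕ) ≤ p from by omega, show (1:ℕ) ≤ n from by omega, hnp]
    ring

lemma phi_smul (p : ℕ) (a : k) (x : Rmv) :
    Phi (k := k) p (a • x) = a • Phi (k := k) p x := by
  rw [← algebraMap_smul Amv a x, map_smul, algebraMap_smul]

lemma ker_subset_span (p : ℕ) (hp : 2 ≤ p) (f : Rmv) (hf : Phi (k := k) p f = 0) :
    f ∈ Ideal.span (gens (k := k) p) := by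
  classical
  obtain ⟨c, hc⟩ := Finsupp.mem_span_range_iff_exists_finsupp.mp (span_vm_top f)
  -- the coefficient finsupp pushed to the weight monoid vanishes
  have hd : c.mapDomain (wmap p) = 0 := by
    apply linearIndependent_iff.mp (eps_li (k := k))
    rw [Finsupp.linearCombination_apply]
    rw [Finsupp.sum_mapDomain_index (fun t => zero_smul k (epsT (k := k) t))
      (fun t a₁ a₂ => add_smul a₁ a₂ (epsT (k := k) t))]
    have h2 : (c.sum fun q a => a • epsT (k := k) (wmap p q))
        = Phi (k := k) p (c.sum fun q a => a • vmi q) := by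
      rw [map_finsuppSum]
      exact (Finsupp.sum_congr fun q _ => by rw [phi_smul, phi_vmi]).symm
    rw [h2, hc, hf]
  -- choose representatives in each fiber of the weight map
  have hrw : ∀ q, wmap p ((fun t => if h : ∃ q', wmap p q' = t then h.choose
      else (0, 0, 0, 0, 0)) (wmap p q)) = wmap p q := by
    intro q
    have hex : ∃ q', wmap p q' = wmap p q := ⟨q, rfl⟩
    simp only [dif_pos hex]
    exact hex.choose_spec
  set r : ℕ × ℕ × ℕ → ℕ × ℕ × ℕ × ℕ × ℕ :=
    fun t => if h : ∃ q', wmap p q' = t then h.choose else (0, 0, 0, 0, 0) with hr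
  have hsplit : f = (c.sum fun q a => a • (vmi (k := k) q - vmi (r (wmap p q))))
      + (c.sum fun q a => a • vmi (k := k) (r (wmap p q))) := by
    rw [← Finsupp.sum_add]
    rw [← hc]
    exact (Finsupp.sum_congr fun q _ => by rw [smul_sub, sub_add_cancel]).symm
  have hzero : (c.sum fun q a => a • vmi (k := k) (r (wmap p q))) = 0 := by
    have h3 := Finsupp.sum_mapDomain_index (f := wmap p) (s := c)
      (h := fun t a => a • vmi (k := k) (r t))
      (fun t => zero_smul k _) (fun t a₁ a₂ => add_smul a₁ a₂ _)
    rw [← h3, hd, Finsupp.sum_zero_index]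
  rw [hsplit, hzero, add_zero]
  refine Submodule.finsuppSum_mem _ _ _ _ (fun q _ => ?_)
  have hx : vmi (k := k) q - vmi (r (wmap p q)) ∈ Ideal.span (gens (k := k) p) :=
    key p hp q (r (wmap p q)) (hrw q).symm
  have h4 : (c q) • (vmi (k := k) q - vmi (r (wmap p q)))
      = algebraMap k Rmv (c q) * (vmi q - vmi (r (wmap p q))) := by
    rw [← smul_eq_mul, algebraMap_smul]
  rw [h4]
  exact Ideal.mul_mem_left _ _ hx

theorem ker_phi (p : ℕ) (hp : 2 ≤ p) :
    RingHom.ker (Phi (k := k) p) = Ideal.span (gens (k := k) p) := by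
  apply le_antisymm
  · intro f hf
    exact ker_subset_span p hp f hf
  · rw [Ideal.span_le]
    intro x hx
    rw [SetLike.mem_coe, RingHom.mem_ker]
    exact gens_phi_zero p hp x hx

end Stmt10

/-- For `A = k[a₁,a₂]`, `p ≥ 2`, `x₁ = a₁^p`, `x₂ = a₂^p`,
`y = a₁a₂^{p-1}`, the kernel of `φ : A[X₁,X₂,Y] → A[t]`, `X₁ ↦ x₁t, X₂ ↦ x₂t, Y ↦ yt`,
is generated by `F₁ = a₁^{p-1}Y − a₂^{p-1}X₁`, `G₁ = a₂Y − a₁X₂`, and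
`Fₙ = a₁^{p-n}Yⁿ − a₂^{p-n}X₁X₂^{n-1}` for `2 ≤ n ≤ p`.
(Here `X₁ = X 0`, `X₂ = X 1`, `Y = X 2`.) -/
theorem stmt_10 {k : Type*} [Field k] (p : ℕ) (hp : 2 ≤ p) :
    let a₁ : MvPolynomial (Fin 2) k := MvPolynomial.X 0
    let a₂ : MvPolynomial (Fin 2) k := MvPolynomial.X 1
    let φ : MvPolynomial (Fin 3) (MvPolynomial (Fin 2) k) →ₐ[MvPolynomial (Fin 2) k]
        Polynomial (MvPolynomial (Fin 2) k) :=
      MvPolynomial.aeval ![Polynomial.C (a₁ ^ p) * Polynomial.X,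
        Polynomial.C (a₂ ^ p) * Polynomial.X,
        Polynomial.C (a₁ * a₂ ^ (p - 1)) * Polynomial.X]
    RingHom.ker φ = Ideal.span
      ({MvPolynomial.C (a₁ ^ (p - 1)) * MvPolynomial.X 2
          - MvPolynomial.C (a₂ ^ (p - 1)) * MvPolynomial.X 0,
        MvPolynomial.C a₂ * MvPolynomial.X 2 - MvPolynomial.C a₁ * MvPolynomial.X 1} ∪
        (fun n => MvPolynomial.C (a₁ ^ (p - n)) * MvPolynomial.X 2 ^ n
          - MvPolynomial.C (a₂ ^ (p - n))
            * (MvPolynomial.X 0 * MvPolynomial.X 1 ^ (n - 1))) '' Set.Icc 2 p) := by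
  intro a₁ a₂ φ
  exact Stmt10.ker_phi p hp
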